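/- For any two enhanced Lagrangians L° and M°, the space of intertwining operators Int_{M°,L°} = Hom_{H(V,ω)}(H_{L°}, H_{M°}) (linear maps commuting with the right-translation action of the Heisenberg group) is one-dimensional over ℂ. -/

import Mathlib

/-!
For any two enhanced Lagrangians `L°`, `M°` of a `2n`-dimensional symplectic
vector space `(V,ω)` over a finite field of odd cardinality, the space
`Int_{M°,L°} = Hom_{H(V,ω)}(H_{L°}, H_{M°})` of intertwining operators between the
associated models of the Heisenberg representation is one-dimensional over `ℂ`.
-/

noncomputable section
set_option linter.unusedSectionVars false
set_option synthInstance.maxHeartbeats 1000000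
set_option maxHeartbeats 1000000

namespace KRSup

variable (F V : Type) [Field F] [Fintype F] [AddCommGroup V] [Module F V]

/-- Heisenberg group multiplication on `H = V × F`:
`(v,z)·(v',z') = (v+v', z+z'+½ω(v,v'))`. -/
def hMul (ω : LinearMap.BilinForm F V) (h h' : V × F) : V × F :=
  (h.1 + h'.1, h.2 + h'.2 + (2 : F)⁻¹ * ω h.1 h'.1)

variable {F V}

lemma hMul_assoc (ω : LinearMap.BilinForm F V) (h₁ h₂ h₃ : V × F) :
    hMul F V ω (hMul F V ω h₁ h₂) h₃ = hMul F V ω h₁ (hMul F V ω h₂ h₃) := by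
  simp only [hMul, Prod.mk.injEq, map_add, LinearMap.add_apply]
  exact ⟨add_assoc _ _ _, by ring⟩

variable (F V)

/-- The model `H_{L°}`: the space of functions `f : H → ℂ` with
`f((l,z)·h) = ψ(z)·f(h)` for all `l ∈ L`, `z ∈ F`. -/
def model (ω : LinearMap.BilinForm F V) (ψ : AddChar F ℂ) (L : Submodule F V) :
    Submodule ℂ ((V × F) → ℂ) where
  carrier := {f | ∀ l ∈ L, ∀ z : F, ∀ h : V × F, f (hMul F V ω (l, z) h) = ψ z * f h}
  add_mem' := by
    intro f g hf hg l hl z h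
    simp only [Pi.add_apply, hf l hl z h, hg l hl z h, mul_add]
  zero_mem' := by intro l hl z h; simp
  smul_mem' := by
    intro c f hf l hl z h
    simp only [Pi.smul_apply, smul_eq_mul, hf l hl z h]
    ring

/-- Right translation by `h₀` on functions on the Heisenberg group. -/
def rtrans (ω : LinearMap.BilinForm F V) (h₀ : V × F) :
    ((V × F) → ℂ) →ₗ[ℂ] ((V × F) → ℂ) where
  toFun f := fun h => f (hMul F V ω h h₀)
  map_add' _ _ := rfl
  map_smul' _ _ := rfl

lemma rtrans_mem (ω : LinearMap.BilinForm F V) (ψ : AddChar F ℂ) (L : Submodule F V)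
    (h₀ : V × F) {f : (V × F) → ℂ} (hf : f ∈ model F V ω ψ L) :
    rtrans F V ω h₀ f ∈ model F V ω ψ L := by
  intro l hl z h
  show f (hMul F V ω (hMul F V ω (l, z) h) h₀) = ψ z * f (hMul F V ω h h₀)
  rw [hMul_assoc]
  exact hf l hl z _

/-- The Heisenberg representation `π_{L°}` on the model `H_{L°}`, by right translation. -/
def heisAction (ω : LinearMap.BilinForm F V) (ψ : AddChar F ℂ) (L : Submodule F V)
    (h₀ : V × F) : ↥(model F V ω ψ L) →ₗ[ℂ] ↥(model F V ω ψ L) :=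
  (rtrans F V ω h₀).restrict (fun _ hf => rtrans_mem F V ω ψ L h₀ hf)

/-- An enhanced Lagrangian `(L, σ_L)`: a Lagrangian subspace `L ⊂ V` together with a
nonzero element `σ_L` of the `n`-th exterior power `ΛⁿL` (realized inside the
exterior algebra of `V` as the `n`-th power of the image of `L`). -/
structure EnhLag (ω : LinearMap.BilinForm F V) (n : ℕ) where
  /-- the Lagrangian subspace -/
  L : Submodule F V
  isotropic : ∀ x ∈ L, ∀ y ∈ L, ω x y = 0
  dim : Module.finrank F ↥L = n
  /-- the enhancement `σ_L ∈ ΛⁿL`, `σ_L ≠ 0` -/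
  σ : ExteriorAlgebra F V
  σ_mem : σ ∈ (Submodule.map (ExteriorAlgebra.ι F) L) ^ n
  σ_ne : σ ≠ 0

/-- The space of intertwining operators `Hom_{H(V,ω)}(H_{L°}, H_{M°})`:
linear maps commuting with the right-translation action of the Heisenberg group. -/
def intertwiners (ω : LinearMap.BilinForm F V) (ψ : AddChar F ℂ) (M L : Submodule F V) :
    Submodule ℂ (↥(model F V ω ψ L) →ₗ[ℂ] ↥(model F V ω ψ M)) where
  carrier := {T | ∀ h₀ : V × F,
    T ∘ₗ heisAction F V ω ψ L h₀ = heisAction F V ω ψ M h₀ ∘ₗ T}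
  add_mem' := by
    intro T S hT hS h₀
    simp only [LinearMap.add_comp, LinearMap.comp_add, hT h₀, hS h₀]
  zero_mem' := by intro h₀; simp
  smul_mem' := by
    intro c T hT h₀
    simp only [LinearMap.smul_comp, LinearMap.comp_smul, hT h₀]

instance instIntAcg (ω : LinearMap.BilinForm F V) (ψ : AddChar F ℂ) (M L : Submodule F V) :
    AddCommGroup ↥(intertwiners F V ω ψ M L) :=
  @Submodule.addCommGroup ℂ (↥(model F V ω ψ L) →ₗ[ℂ] ↥(model F V ω ψ M)) _
    inferInstance inferInstance _

instance instIntMod (ω : LinearMap.BilinForm F V) (ψ : AddChar F ℂ) (M L : Submodule F V) :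
    Module ℂ ↥(intertwiners F V ω ψ M L) :=
  @Submodule.module ℂ (↥(model F V ω ψ L) →ₗ[ℂ] ↥(model F V ω ψ M)) _
    inferInstance inferInstance _

section Aux
variable {F V}
attribute [local instance] Classical.propDecidable
variable (ω : LinearMap.BilinForm F V) (ψ : AddChar F ℂ)

/-- inverse in the Heisenberg group -/
def hInv (h : V × F) : V × F := (-h.1, -h.2)

lemma skew (halt : ∀ v : V, ω v v = 0) (u v : V) : ω u v = - ω v u := by
  have h := halt (u + v)
  simp only [map_add, LinearMap.add_apply, halt u, halt v] at h
  have : ω u v + ω v u = 0 := by rw [← h]; ring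
  linear_combination this

variable {ω}

lemma hInv_hMul (halt : ∀ v : V, ω v v = 0) (h : V × F) :
    hMul F V ω (hInv h) h = (0, 0) := by
  simp only [hMul, hInv, Prod.mk.injEq, map_neg, LinearMap.neg_apply, halt]
  constructor <;> simp

lemma hMul_hInv (halt : ∀ v : V, ω v v = 0) (h : V × F) :
    hMul F V ω h (hInv h) = (0, 0) := by
  simp only [hMul, hInv, Prod.mk.injEq, map_neg, LinearMap.neg_apply, halt]
  constructor <;> simp

lemma hMul_zero_left (h : V × F) : hMul F V ω (0, 0) h = h := by
  simp [hMul]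

lemma hMul_zero_right (h : V × F) : hMul F V ω h (0, 0) = h := by
  simp [hMul]

lemma hInv_hMul_eq (halt : ∀ v : V, ω v v = 0) (a b : V × F) :
    hInv (hMul F V ω a b) = hMul F V ω (hInv b) (hInv a) := by
  simp only [hMul, hInv, Prod.mk.injEq, map_neg, LinearMap.neg_apply, neg_neg]
  refine ⟨by abel, ?_⟩
  rw [skew ω halt b.1 a.1]
  ring

/-- Left multiplication by `g` as a bijection of the Heisenberg group. -/
def mulLeftEquiv (halt : ∀ v : V, ω v v = 0) (g : V × F) : (V × F) ≃ (V × F) where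
  toFun h := hMul F V ω g h
  invFun h := hMul F V ω (hInv g) h
  left_inv h := by show hMul F V ω (hInv g) (hMul F V ω g h) = h
                   rw [← hMul_assoc, hInv_hMul halt, hMul_zero_left]
  right_inv h := by show hMul F V ω g (hMul F V ω (hInv g) h) = h
                    rw [← hMul_assoc, hMul_hInv halt, hMul_zero_left]

end Aux

section Aux2
attribute [local instance] Classical.propDecidable
variable {F V}
variable (ω : LinearMap.BilinForm F V) (ψ : AddChar F ℂ)

/-- The canonical vector `δ` of the model `H_{L°}`. -/
def delta (L : Submodule F V) : (V × F) → ℂ :=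
  fun h => if h.1 ∈ L then ψ h.2 else 0

lemma delta_mem (L : Submodule F V) (hL : ∀ x ∈ L, ∀ y ∈ L, ω x y = 0) :
    delta ψ L ∈ model F V ω ψ L := by
  intro l hl z h
  dsimp only [delta, hMul]
  by_cases hh : h.1 ∈ L
  · rw [if_pos (L.add_mem hl hh), if_pos hh, hL l hl h.1 hh]
    rw [mul_zero, add_zero, ψ.map_add_eq_mul]
  · rw [if_neg (fun hc => hh (by simpa using L.add_mem (L.neg_mem hl) hc)), if_neg hh, mul_zero]

lemma delta_right (L : Submodule F V) (hL : ∀ x ∈ L, ∀ y ∈ L, ω x y = 0)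
    (l : V) (hl : l ∈ L) (z : F) (h : V × F) :
    delta ψ L (hMul F V ω h (l, z)) = ψ z * delta ψ L h := by
  dsimp only [delta, hMul]
  by_cases hh : h.1 ∈ L
  · rw [if_pos (L.add_mem hh hl), if_pos hh, hL h.1 hh l hl]
    rw [mul_zero, add_zero, ψ.map_add_eq_mul]
    ring
  · rw [if_neg (fun hc => hh (by simpa using L.add_mem hc (L.neg_mem hl))), if_neg hh, mul_zero]

end Aux2
section Aux3
attribute [local instance] Classical.propDecidable
variable {F V}
variable (ω : LinearMap.BilinForm F V) (ψ : AddChar F ℂ)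

variable {ω ψ} (L M : Submodule F V)

/-- left `M`-equivariance of a kernel -/
def KerLeft (Δ : (V × F) → ℂ) : Prop :=
  ∀ m ∈ M, ∀ z : F, ∀ h : V × F, Δ (hMul F V ω (m, z) h) = ψ z * Δ h

/-- right `L`-equivariance of a kernel -/
def KerRight (Δ : (V × F) → ℂ) : Prop :=
  ∀ l ∈ L, ∀ z : F, ∀ h : V × F, Δ (hMul F V ω h (l, z)) = ψ z * Δ h

variable {L M}

lemma ker_on_sup {Δ : (V × F) → ℂ} (hleft : KerLeft (ω := ω) (ψ := ψ) M Δ)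
    (hright : KerRight (ω := ω) (ψ := ψ) L Δ)
    {m l : V} (hm : m ∈ M) (hl : l ∈ L) (z : F) :
    Δ (m + l, z) = ψ (z - (2:F)⁻¹ * ω m l) * Δ (0, 0) := by
  have e1 : hMul F V ω (m, z - (2:F)⁻¹ * ω m l) (l, 0) = (m + l, z) := by
    simp only [hMul, Prod.mk.injEq]
    exact ⟨by trivial, by ring⟩
  have e2 : hMul F V ω ((0 : V), (0 : F)) (l, 0) = (l, 0) := hMul_zero_left _
  calc Δ (m + l, z) = ψ (z - (2:F)⁻¹ * ω m l) * Δ (l, 0) := by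
        rw [← e1]; exact hleft m hm _ _
    _ = ψ (z - (2:F)⁻¹ * ω m l) * Δ (0, 0) := by
        rw [← e2, hright l hl 0 (0,0), AddChar.map_zero_eq_one, one_mul]

lemma ker_off (h2 : (2:F) ≠ 0) (halt : ∀ v : V, ω v v = 0)
    {Δ : (V × F) → ℂ} (hleft : KerLeft (ω := ω) (ψ := ψ) M Δ)
    (hright : KerRight (ω := ω) (ψ := ψ) L Δ)
    {v : V} {u : V} (huL : u ∈ L) (huM : u ∈ M) (hne : ψ (ω u v) ≠ 1) (z : F) :
    Δ (v, z) = 0 := by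
  set c := ω u v with hc
  have e1 : hMul F V ω (hMul F V ω (u, 0) (v, z)) (-u, 0) = (v, z + c) := by
    simp only [hMul, Prod.mk.injEq, map_add, map_neg, LinearMap.add_apply, LinearMap.neg_apply,
      halt, hc]
    constructor
    · abel
    · rw [skew ω halt v u]
      field_simp
      ring
  have e2 : hMul F V ω ((0:V), c) (v, z) = (v, z + c) := by
    simp only [hMul, Prod.mk.injEq, map_zero, LinearMap.zero_apply]
    exact ⟨by abel, by ring⟩
  have h1 : Δ (v, z + c) = Δ (v, z) := by
    rw [← e1, hright (-u) (L.neg_mem huL) 0 _, hleft u huM 0 _,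
      AddChar.map_zero_eq_one, one_mul, one_mul]
  have h2' : Δ (v, z + c) = ψ c * Δ (v, z) := by
    rw [← e2]; exact hleft 0 M.zero_mem c _
  have : (ψ c - 1) * Δ (v, z) = 0 := by rw [sub_mul, ← h2', h1, one_mul, sub_self]
  rcases mul_eq_zero.mp this with h | h
  · exact absurd (by linear_combination h) hne
  · exact h

/-- Decomposability of `v` as `m + l`, `m ∈ M`, `l ∈ L`. -/
def DecP (M L : Submodule F V) (v : V) : Prop :=
  ∃ p : V × V, p.1 ∈ M ∧ p.2 ∈ L ∧ p.1 + p.2 = v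

/-- The canonical intertwining kernel `Δ₀`. -/
def Dker (ω : LinearMap.BilinForm F V) (ψ : AddChar F ℂ) (M L : Submodule F V) :
    (V × F) → ℂ := fun h =>
  if hv : DecP M L h.1 then
    ψ (h.2 - (2:F)⁻¹ * ω hv.choose.1 hv.choose.2) else 0

variable (hM : ∀ x ∈ M, ∀ y ∈ M, ω x y = 0) (hL : ∀ x ∈ L, ∀ y ∈ L, ω x y = 0)
include hM hL

lemma Dker_spec (halt : ∀ v : V, ω v v = 0)
    {m l : V} (hm : m ∈ M) (hl : l ∈ L) (z : F) :
    Dker ω ψ M L (m + l, z) = ψ (z - (2:F)⁻¹ * ω m l) := by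
  have hv : DecP M L ((m + l, z) : V × F).1 := ⟨(m, l), hm, hl, rfl⟩
  simp only [Dker]
  rw [dif_pos hv]
  obtain ⟨hm', hl', hsum⟩ := hv.choose_spec
  set m' := hv.choose.1
  set l' := hv.choose.2
  have hsum' : m' + l' = m + l := hsum
  have hl'eq : l' = l + (m - m') := by
    apply add_left_cancel (a := m')
    rw [hsum']; abel
  have huM' : m - m' ∈ M := M.sub_mem hm hm'
  have huL' : m - m' ∈ L := by
    have hd : m - m' = l' - l := by rw [hl'eq]; abel
    rw [hd]; exact L.sub_mem hl' hl
  have key : ω m' l' = ω m l := by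
    have e1 : ω m' (m - m') = 0 := hM m' hm' _ huM'
    have e2 : ω (m - m') l = 0 := hL _ huL' l hl
    simp only [map_sub, LinearMap.sub_apply] at e2
    have step1 : ω m' l' = ω m' l := by rw [hl'eq, map_add, e1, add_zero]
    rw [step1]
    linear_combination - e2
  rw [key]

end Aux3
section Aux4
attribute [local instance] Classical.propDecidable
variable {F V}
variable {ω : LinearMap.BilinForm F V} {ψ : AddChar F ℂ}
variable {L M : Submodule F V}
variable (hM : ∀ x ∈ M, ∀ y ∈ M, ω x y = 0) (hL : ∀ x ∈ L, ∀ y ∈ L, ω x y = 0)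
  (halt : ∀ v : V, ω v v = 0)
include hM hL halt

lemma Dker_left {m : V} (hm : m ∈ M) (z : F) (h : V × F) :
    Dker ω ψ M L (hMul F V ω (m, z) h) = ψ z * Dker ω ψ M L h := by
  obtain ⟨v, t⟩ := h
  by_cases hd : DecP M L v
  · obtain ⟨⟨m₁, l₁⟩, hm₁, hl₁, hsum⟩ := hd
    simp only at hm₁ hl₁ hsum
    subst hsum
    have hstep : hMul F V ω (m, z) (m₁ + l₁, t)
        = ((m + m₁) + l₁, z + t + (2:F)⁻¹ * ω m (m₁ + l₁)) := by
      simp only [hMul, Prod.mk.injEq]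
      exact ⟨by abel, by trivial⟩
    rw [hstep, Dker_spec hM hL halt (M.add_mem hm hm₁) hl₁,
      Dker_spec hM hL halt hm₁ hl₁, ← ψ.map_add_eq_mul]
    congr 1
    have hMM : ω m m₁ = 0 := hM m hm m₁ hm₁
    simp only [map_add, LinearMap.add_apply, hMM]
    ring
  · have hd' : ¬ DecP M L (hMul F V ω (m, z) (v, t)).1 := by
      intro hc
      obtain ⟨⟨m₂, l₂⟩, hm₂, hl₂, hsum₂⟩ := hc
      simp only [hMul] at hsum₂
      refine hd ⟨(m₂ - m, l₂), M.sub_mem hm₂ hm, hl₂, ?_⟩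
      rw [← sub_eq_iff_eq_add'] at hsum₂
      show m₂ - m + l₂ = v
      rw [← hsum₂]; abel
    simp only [Dker]
    rw [dif_neg hd', dif_neg hd, mul_zero]

lemma Dker_right {l : V} (hl : l ∈ L) (z : F) (h : V × F) :
    Dker ω ψ M L (hMul F V ω h (l, z)) = ψ z * Dker ω ψ M L h := by
  obtain ⟨v, t⟩ := h
  by_cases hd : DecP M L v
  · obtain ⟨⟨m₁, l₁⟩, hm₁, hl₁, hsum⟩ := hd
    simp only at hm₁ hl₁ hsum
    subst hsum
    have hstep : hMul F V ω (m₁ + l₁, t) (l, z)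
        = (m₁ + (l₁ + l), t + z + (2:F)⁻¹ * ω (m₁ + l₁) l) := by
      simp only [hMul, Prod.mk.injEq]
      exact ⟨by abel, by trivial⟩
    rw [hstep, Dker_spec hM hL halt hm₁ (L.add_mem hl₁ hl),
      Dker_spec hM hL halt hm₁ hl₁, ← ψ.map_add_eq_mul]
    congr 1
    have hLL : ω l₁ l = 0 := hL l₁ hl₁ l hl
    simp only [map_add, LinearMap.add_apply, hLL]
    ring
  · have hd' : ¬ DecP M L (hMul F V ω (v, t) (l, z)).1 := by
      intro hc
      obtain ⟨⟨m₂, l₂⟩, hm₂, hl₂, hsum₂⟩ := hc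
      simp only [hMul] at hsum₂
      exact hd ⟨(m₂, l₂ - l), hm₂, L.sub_mem hl₂ hl, by
        simp only at hsum₂ ⊢
        have : m₂ + l₂ = v + l := hsum₂
        have h3 : m₂ + (l₂ - l) = (m₂ + l₂) - l := by abel
        rw [h3, this]; abel⟩
    simp only [Dker]
    rw [dif_neg hd', dif_neg hd, mul_zero]

end Aux4

section Aux5
attribute [local instance] Classical.propDecidable
variable {F V}
variable {ω : LinearMap.BilinForm F V}

lemma exists_nonorth [FiniteDimensional F V] {n : ℕ}
    (hdim : Module.finrank F V = 2 * n)
    (halt : ∀ v : V, ω v v = 0)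
    (hnd : ∀ v : V, (∀ u : V, ω v u = 0) → v = 0)
    {L M : Submodule F V}
    (hL : ∀ x ∈ L, ∀ y ∈ L, ω x y = 0) (hM : ∀ x ∈ M, ∀ y ∈ M, ω x y = 0)
    (hdL : Module.finrank F ↥L = n) (hdM : Module.finrank F ↥M = n)
    {v : V} (hv : ¬ DecP M L v) :
    ∃ u, u ∈ L ∧ u ∈ M ∧ ω u v ≠ 0 := by
  by_contra hcon
  push_neg at hcon
  have hrefl : ω.IsRefl := fun x y hxy => by
    rw [skew ω halt y x, hxy, neg_zero]
  have htop : ω.orthogonal ⊤ = ⊥ := by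
    ext x
    simp only [LinearMap.BilinForm.mem_orthogonal_iff, Submodule.mem_bot]
    constructor
    · intro hx
      exact hnd x (fun u => hrefl u x (hx u Submodule.mem_top))
    · rintro rfl u _
      exact map_zero (ω u)
  have hle : L ⊔ M ≤ ω.orthogonal (L ⊓ M) := by
    apply sup_le
    · intro x hx u hu
      exact hL u hu.1 x hx
    · intro x hx u hu
      exact hM u hu.2 x hx
  have e1 : Module.finrank F ↥(L ⊓ M) + Module.finrank F ↥(ω.orthogonal (L ⊓ M))
      = Module.finrank F V := by
    rw [LinearMap.BilinForm.finrank_add_finrank_orthogonal hrefl (L ⊓ M), htop]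
    simp
  have e2 : Module.finrank F ↥(L ⊔ M) + Module.finrank F ↥(L ⊓ M)
      = Module.finrank F V := by
    rw [Submodule.finrank_sup_add_finrank_inf_eq, hdL, hdM, hdim]
    ring
  have heq : L ⊔ M = ω.orthogonal (L ⊓ M) :=
    Submodule.eq_of_le_of_finrank_eq hle (by omega)
  have hvmem : v ∈ ω.orthogonal (L ⊓ M) := by
    intro u hu
    exact hcon u hu.1 hu.2
  rw [← heq] at hvmem
  obtain ⟨y, hy, z, hz, hyz⟩ := Submodule.mem_sup.mp hvmem
  exact hv ⟨(z, y), hz, hy, by rw [← hyz]; abel⟩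

end Aux5
section Aux6
attribute [local instance] Classical.propDecidable
variable {F V}
variable {ω : LinearMap.BilinForm F V} (ψ : AddChar F ℂ)

lemma sum_ind [Fintype V] (L : Submodule F V) (c : ℂ) :
    ∑ x : V × F, (if x.1 ∈ L then c else 0)
      = (Fintype.card {x : V × F // x.1 ∈ L} : ℂ) * c := by
  rw [Finset.sum_ite, Finset.sum_const, Finset.sum_const_zero, add_zero, nsmul_eq_mul]
  congr 2
  rw [Fintype.card_subtype]

variable {ψ}

lemma span_delta [Fintype V] (L : Submodule F V) (hL : ∀ x ∈ L, ∀ y ∈ L, ω x y = 0)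
    (halt : ∀ v : V, ω v v = 0)
    {f : (V × F) → ℂ} (hf : f ∈ model F V ω ψ L) (h : V × F) :
    (Fintype.card {x : V × F // x.1 ∈ L} : ℂ) * f h
      = ∑ h₀ : V × F, f (hInv h₀) * delta ψ L (hMul F V ω h h₀) := by
  set e := mulLeftEquiv (ω := ω) halt (hInv h) with he
  have key : ∀ x : V × F,
      (if x.1 ∈ L then f h else 0)
        = f (hInv (e x)) * delta ψ L (hMul F V ω h (e x)) := by
    intro x
    have e2 : hMul F V ω h (hMul F V ω (hInv h) x) = x := by
      rw [← hMul_assoc, hMul_hInv halt, hMul_zero_left]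
    have e3 : hInv (hMul F V ω (hInv h) x) = hMul F V ω (hInv x) h := by
      rw [hInv_hMul_eq halt]
      congr 1
      simp [hInv]
    show _ = f (hInv (hMul F V ω (hInv h) x)) * delta ψ L (hMul F V ω h (hMul F V ω (hInv h) x))
    rw [e2, e3]
    simp only [delta]
    by_cases hx : x.1 ∈ L
    · rw [if_pos hx, if_pos hx]
      have hinvx : hInv x = ((-x.1 : V), (-x.2 : F)) := rfl
      rw [hinvx]
      have hval : f (hMul F V ω (-x.1, -x.2) h) = ψ (-x.2) * f h :=
        hf (-x.1) (L.neg_mem hx) (-x.2) h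
      rw [hval]
      have hone : ψ (-x.2) * ψ x.2 = 1 := by
        rw [← ψ.map_add_eq_mul, neg_add_cancel, AddChar.map_zero_eq_one]
      linear_combination (-(f h)) * hone
    · rw [if_neg hx, if_neg hx, mul_zero]
  calc (Fintype.card {x : V × F // x.1 ∈ L} : ℂ) * f h
      = ∑ x : V × F, (if x.1 ∈ L then f h else 0) := (sum_ind L (f h)).symm
    _ = ∑ x : V × F, f (hInv (e x)) * delta ψ L (hMul F V ω h (e x)) :=
        Finset.sum_congr rfl (fun x _ => key x)
    _ = ∑ h₀ : V × F, f (hInv h₀) * delta ψ L (hMul F V ω h h₀) :=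
        Equiv.sum_comp e (fun h₀ => f (hInv h₀) * delta ψ L (hMul F V ω h h₀))

lemma span_delta' [Fintype V] (L : Submodule F V) (hL : ∀ x ∈ L, ∀ y ∈ L, ω x y = 0)
    (halt : ∀ v : V, ω v v = 0) (f : ↥(model F V ω ψ L)) :
    (Fintype.card {x : V × F // x.1 ∈ L} : ℂ) • f
      = ∑ h₀ : V × F, f.val (hInv h₀)
          • heisAction F V ω ψ L h₀ ⟨delta ψ L, delta_mem ω ψ L hL⟩ := by
  apply Subtype.ext
  funext h
  have hmain := span_delta L hL halt f.2 h
  calc (((Fintype.card {x : V × F // x.1 ∈ L} : ℂ) • f : ↥(model F V ω ψ L)) : (V × F) → ℂ) h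
      = (Fintype.card {x : V × F // x.1 ∈ L} : ℂ) * f.val h := rfl
    _ = ∑ h₀ : V × F, f.val (hInv h₀) * delta ψ L (hMul F V ω h h₀) := hmain
    _ = ((∑ h₀ : V × F, f.val (hInv h₀)
          • heisAction F V ω ψ L h₀ ⟨delta ψ L, delta_mem ω ψ L hL⟩ :
            ↥(model F V ω ψ L)) : (V × F) → ℂ) h := by
        rw [AddSubmonoidClass.coe_finset_sum, Finset.sum_apply]
        exact Finset.sum_congr rfl (fun h₀ _ => rfl)

variable (ψ)

/-- The intertwining operator associated to a kernel. -/
def Tmap [Fintype V] (M L : Submodule F V) (Δ : (V × F) → ℂ)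
    (hleft : KerLeft (ω := ω) (ψ := ψ) M Δ) :
    ↥(model F V ω ψ L) →ₗ[ℂ] ↥(model F V ω ψ M) where
  toFun f := ⟨fun h => ∑ h₀ : V × F, Δ (hMul F V ω h h₀) * f.val (hInv h₀), by
    intro m hm z h
    rw [Finset.mul_sum]
    refine Finset.sum_congr rfl fun h₀ _ => ?_
    rw [hMul_assoc, hleft m hm z _, mul_assoc]⟩
  map_add' f g := by
    apply Subtype.ext
    funext h
    show ∑ h₀ : V × F, Δ (hMul F V ω h h₀) * (f.val + g.val) (hInv h₀)
      = (∑ h₀ : V × F, Δ (hMul F V ω h h₀) * f.val (hInv h₀))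
        + ∑ h₀ : V × F, Δ (hMul F V ω h h₀) * g.val (hInv h₀)
    rw [← Finset.sum_add_distrib]
    refine Finset.sum_congr rfl fun h₀ _ => ?_
    simp only [Pi.add_apply]
    ring
  map_smul' c f := by
    apply Subtype.ext
    funext h
    show ∑ h₀ : V × F, Δ (hMul F V ω h h₀) * (c • f.val) (hInv h₀)
      = c * ∑ h₀ : V × F, Δ (hMul F V ω h h₀) * f.val (hInv h₀)
    rw [Finset.mul_sum]
    refine Finset.sum_congr rfl fun h₀ _ => ?_
    simp only [Pi.smul_apply, smul_eq_mul]
    ring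

lemma Tmap_mem [Fintype V] (M L : Submodule F V) (halt : ∀ v : V, ω v v = 0)
    (Δ : (V × F) → ℂ) (hleft : KerLeft (ω := ω) (ψ := ψ) M Δ) :
    Tmap ψ M L Δ hleft ∈ intertwiners F V ω ψ M L := by
  intro g
  apply LinearMap.ext
  intro f
  apply Subtype.ext
  funext h
  show ∑ h₀ : V × F, Δ (hMul F V ω h h₀) * f.val (hMul F V ω (hInv h₀) g)
    = ∑ h₀ : V × F, Δ (hMul F V ω (hMul F V ω h g) h₀) * f.val (hInv h₀)
  refine (Fintype.sum_equiv (mulLeftEquiv (ω := ω) halt g)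
    (fun h₀ => Δ (hMul F V ω (hMul F V ω h g) h₀) * f.val (hInv h₀))
    (fun h₀ => Δ (hMul F V ω h h₀) * f.val (hMul F V ω (hInv h₀) g)) ?_).symm
  intro x
  show Δ (hMul F V ω (hMul F V ω h g) x) * f.val (hInv x)
    = Δ (hMul F V ω h (hMul F V ω g x)) * f.val (hMul F V ω (hInv (hMul F V ω g x)) g)
  rw [← hMul_assoc]
  congr 1
  rw [hInv_hMul_eq halt, hMul_assoc, hInv_hMul halt, hMul_zero_right]

/-- Evaluation of `T δ` at the identity. -/
def Emap [Fintype V] (ω : LinearMap.BilinForm F V) (ψ : AddChar F ℂ) (M L : Submodule F V)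
    (hL : ∀ x ∈ L, ∀ y ∈ L, ω x y = 0) :
    ↥(intertwiners F V ω ψ M L) →ₗ[ℂ] ℂ where
  toFun T := (T.val ⟨delta ψ L, delta_mem ω ψ L hL⟩).val ((0 : V), (0 : F))
  map_add' T S := rfl
  map_smul' c T := rfl

end Aux6

/-- For any two enhanced Lagrangians `L°` and `M°`, the space of intertwining
operators `Int_{M°,L°} = Hom_{H(V,ω)}(H_{L°}, H_{M°})` is one-dimensional over `ℂ`. -/
theorem intertwiners_one_dimensional
    (n : ℕ) [FiniteDimensional F V] (hdim : Module.finrank F V = 2 * n)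
    (hq : Odd (Fintype.card F))
    (ω : LinearMap.BilinForm F V)
    (halt : ∀ v : V, ω v v = 0)
    (hnd : ∀ v : V, (∀ u : V, ω v u = 0) → v = 0)
    (ψ : AddChar F ℂ) (hψ : ψ ≠ 1)
    (Lo Mo : EnhLag F V ω n) :
    Module.finrank ℂ ↥(intertwiners F V ω ψ Mo.L Lo.L) = 1 := by
  classical
  haveI : Finite V := Module.finite_of_finite F
  haveI : Fintype V := Fintype.ofFinite V
  have hL := Lo.isotropic
  have hM := Mo.isotropic
  -- 2 ≠ 0 in F
  have h2 : (2 : F) ≠ 0 := by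
    intro hc
    haveI : CharP F (ringChar F) := ringChar.charP F
    have hdvd : ringChar F ∣ 2 :=
      (CharP.cast_eq_zero_iff F (ringChar F) 2).mp (by exact_mod_cast hc)
    obtain ⟨m, hp, hcard⟩ := FiniteField.card F (ringChar F)
    have hp2 : ringChar F = 2 := (Nat.prime_dvd_prime_iff_eq hp Nat.prime_two).mp hdvd
    rw [hp2] at hcard
    rw [hcard] at hq
    have hdvd2 : 2 ∣ 2 ^ (m : ℕ) := dvd_pow_self 2 m.pos.ne'
    exact (Nat.not_even_iff_odd.mpr hq) ((even_iff_two_dvd).mpr hdvd2)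
  -- ψ is nontrivial at some point
  have hpsi : ∃ c : F, ψ c ≠ 1 := by
    by_contra hcon
    push_neg at hcon
    exact hψ (DFunLike.ext ψ 1 fun x => by rw [hcon x, AddChar.one_apply])
  -- the canonical vector δ
  set δ' : ↥(model F V ω ψ Lo.L) := ⟨delta ψ Lo.L, delta_mem ω ψ Lo.L hL⟩ with hδ'
  set E := Emap ω ψ Mo.L Lo.L hL with hEdef
  -- injectivity of E
  have hinj : Function.Injective E := by
    rw [injective_iff_map_eq_zero]
    intro T hT
    set g : ↥(model F V ω ψ Mo.L) := T.val δ' with hg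
    have hgleft : KerLeft (ω := ω) (ψ := ψ) Mo.L g.val := g.2
    have hgright : KerRight (ω := ω) (ψ := ψ) Lo.L g.val := by
      intro l hl z h
      have hcomm := T.2 ((l, z) : V × F)
      have h3 := LinearMap.ext_iff.mp hcomm δ'
      rw [LinearMap.comp_apply, LinearMap.comp_apply] at h3
      have hδeq : heisAction F V ω ψ Lo.L (l, z) δ' = ψ z • δ' := by
        apply Subtype.ext
        funext h'
        show delta ψ Lo.L (hMul F V ω h' (l, z)) = ψ z * delta ψ Lo.L h'
        exact delta_right ω ψ Lo.L hL l hl z h'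
      rw [hδeq, map_smul] at h3
      have h4 := congrArg (fun s : ↥(model F V ω ψ Mo.L) => (s : (V × F) → ℂ) h) h3
      exact h4.symm
    have hg0 : g.val ((0 : V), (0 : F)) = 0 := hT
    have hgzero : g = 0 := by
      apply Subtype.ext
      funext h
      obtain ⟨v, t⟩ := h
      show g.val (v, t) = 0
      by_cases hd : DecP Mo.L Lo.L v
      · obtain ⟨⟨m₁, l₁⟩, hm₁, hl₁, hsum⟩ := hd
        simp only at hm₁ hl₁ hsum
        subst hsum
        rw [ker_on_sup hgleft hgright hm₁ hl₁ t, hg0, mul_zero]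
      · obtain ⟨u, huL, huM, hune⟩ :=
          exists_nonorth hdim halt hnd hL hM Lo.dim Mo.dim hd
        obtain ⟨c, hc⟩ := hpsi
        set u' := (c / ω u v) • u with hu'
        have h1 : u' ∈ Lo.L := Lo.L.smul_mem _ huL
        have h1' : u' ∈ Mo.L := Mo.L.smul_mem _ huM
        have hval : ω u' v = c := by
          rw [hu', map_smul, LinearMap.smul_apply, smul_eq_mul]
          field_simp
        exact ker_off h2 halt hgleft hgright h1 h1' (by rw [hval]; exact hc) t
    -- conclude T = 0
    apply Subtype.ext
    apply LinearMap.ext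
    intro f
    have hN0 : (Fintype.card {x : V × F // x.1 ∈ Lo.L} : ℂ) ≠ 0 := by
      haveI : Nonempty {x : V × F // x.1 ∈ Lo.L} := ⟨⟨((0 : V), (0 : F)), Lo.L.zero_mem⟩⟩
      exact_mod_cast (Nat.cast_ne_zero (R := ℂ)).mpr Fintype.card_ne_zero
    have hspan := span_delta' Lo.L hL halt (ψ := ψ) f
    have happ := congrArg T.val hspan
    rw [map_smul, map_sum] at happ
    have hzero : ∀ h₀ : V × F,
        T.val (f.val (hInv h₀) • heisAction F V ω ψ Lo.L h₀ δ') = 0 := by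
      intro h₀
      rw [map_smul]
      have hcomm := T.2 h₀
      have h3 := LinearMap.ext_iff.mp hcomm δ'
      rw [LinearMap.comp_apply, LinearMap.comp_apply] at h3
      rw [h3, ← hg, hgzero, map_zero, smul_zero]
    rw [Finset.sum_congr rfl (fun h₀ _ => hzero h₀), Finset.sum_const, smul_zero] at happ
    have := smul_eq_zero.mp happ
    rcases this with hc | hc
    · exact absurd hc hN0
    · show T.val f = 0
      exact hc
  -- surjectivity of E
  have hDleft : KerLeft (ω := ω) (ψ := ψ) Mo.L (Dker ω ψ Mo.L Lo.L) :=
    fun m hm z h => Dker_left hM hL halt hm z h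
  have hT₀mem : Tmap ψ Mo.L Lo.L (Dker ω ψ Mo.L Lo.L) hDleft ∈ intertwiners F V ω ψ Mo.L Lo.L :=
    Tmap_mem ψ Mo.L Lo.L halt _ hDleft
  set T₀ : ↥(intertwiners F V ω ψ Mo.L Lo.L) := ⟨_, hT₀mem⟩ with hT₀
  have hET₀ : E T₀ = (Fintype.card {x : V × F // x.1 ∈ Lo.L} : ℂ) := by
    show ∑ h₀ : V × F, Dker ω ψ Mo.L Lo.L (hMul F V ω ((0:V), (0:F)) h₀)
        * delta ψ Lo.L (hInv h₀) = _
    have hterm : ∀ h₀ : V × F,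
        Dker ω ψ Mo.L Lo.L (hMul F V ω ((0:V), (0:F)) h₀) * delta ψ Lo.L (hInv h₀)
          = if h₀.1 ∈ Lo.L then (1 : ℂ) else 0 := by
      intro h₀
      rw [hMul_zero_left]
      have hinvd : delta ψ Lo.L (hInv h₀) = if h₀.1 ∈ Lo.L then ψ (-h₀.2) else 0 := by
        dsimp only [delta, hInv]
        by_cases hx : h₀.1 ∈ Lo.L
        · rw [if_pos (Lo.L.neg_mem hx), if_pos hx]
        · rw [if_neg (fun hcon => hx (by simpa using Lo.L.neg_mem hcon)), if_neg hx]
      rw [hinvd]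
      by_cases hx : h₀.1 ∈ Lo.L
      · rw [if_pos hx, if_pos hx]
        have hDval : Dker ω ψ Mo.L Lo.L h₀ = ψ h₀.2 := by
          have := Dker_spec (ψ := ψ) hM hL halt Mo.L.zero_mem hx h₀.2
          rw [zero_add] at this
          have hz : ω 0 h₀.1 = 0 := by simp
          rw [hz, mul_zero, sub_zero] at this
          convert this using 2
        rw [hDval, ← ψ.map_add_eq_mul, add_neg_cancel, AddChar.map_zero_eq_one]
      · rw [if_neg hx, if_neg hx, mul_zero]
    rw [Finset.sum_congr rfl (fun h₀ _ => hterm h₀), sum_ind Lo.L (1 : ℂ), mul_one]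
  have hN0 : (Fintype.card {x : V × F // x.1 ∈ Lo.L} : ℂ) ≠ 0 := by
    haveI : Nonempty {x : V × F // x.1 ∈ Lo.L} := ⟨⟨((0 : V), (0 : F)), Lo.L.zero_mem⟩⟩
    exact_mod_cast (Nat.cast_ne_zero (R := ℂ)).mpr Fintype.card_ne_zero
  have hsurj : Function.Surjective E := by
    intro c
    refine ⟨(c / E T₀) • T₀, ?_⟩
    rw [map_smul, smul_eq_mul, hET₀]
    exact div_mul_cancel₀ c hN0
  -- conclude
  have hequiv := LinearEquiv.ofBijective E ⟨hinj, hsurj⟩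
  rw [hequiv.finrank_eq, Module.finrank_self]

end KRSup
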